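/- Let Y be a sublattice of a relatively uniformly complete Archimedean vector lattice X. If Y is uniformly closed in X, then Y is relatively uniformly complete. Conversely, if Y is majorizing in X and relatively uniformly complete, then Y is uniformly closed in X. -/
import Mathlib


open Filter Set

section Defs

variable (X : Type*) [Lattice X] [AddCommGroup X] [Module ℝ X]

/-- Archimedean property for a vector lattice. -/
def VLArchimedean : Prop := ∀ x y : X, (∀ n : ℕ, n • x ≤ y) → x ≤ 0

variable {X}

/-- `Y` is a sublattice: a linear subspace closed under `⊔`. -/
def IsVLSublattice (Y : Set X) : Prop :=
  (0 : X) ∈ Y ∧ (∀ a ∈ Y, ∀ b ∈ Y, a + b ∈ Y) ∧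
    (∀ (c : ℝ), ∀ a ∈ Y, c • a ∈ Y) ∧ (∀ a ∈ Y, ∀ b ∈ Y, a ⊔ b ∈ Y)

/-- `Y` is majorizing in `X`. -/
def Majorizing (Y : Set X) : Prop := ∀ x : X, 0 ≤ x → ∃ y ∈ Y, x ≤ y

/-- Relative uniform convergence of a sequence with regulator `e`. -/
def RUTendsto (x : ℕ → X) (l e : X) : Prop :=
  0 ≤ e ∧ ∀ ε : ℝ, 0 < ε → ∃ N, ∀ n ≥ N, |x n - l| ≤ ε • e

/-- Relative uniform Cauchy sequence with regulator `e`. -/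
def RUCauchy (x : ℕ → X) (e : X) : Prop :=
  0 ≤ e ∧ ∀ ε : ℝ, 0 < ε → ∃ N, ∀ n ≥ N, ∀ m ≥ N, |x n - x m| ≤ ε • e

/-- Relative uniform convergence of a net with regulator `e`. -/
def RUTendstoNet {ι : Type*} [Preorder ι] (x : ι → X) (l e : X) : Prop :=
  0 ≤ e ∧ ∀ ε : ℝ, 0 < ε → ∃ α₀, ∀ α ≥ α₀, |x α - l| ≤ ε • e

/-- Relative uniform Cauchy net with regulator `e`. -/
def RUCauchyNet {ι : Type*} [Preorder ι] (x : ι → X) (e : X) : Prop :=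
  0 ≤ e ∧ ∀ ε : ℝ, 0 < ε → ∃ α₀, ∀ α ≥ α₀, ∀ β ≥ α₀, |x α - x β| ≤ ε • e

/-- Uniform adherence of a set: all relative uniform limits of sequences from `A`. -/
def uAdh (A : Set X) : Set X :=
  {l | ∃ x : ℕ → X, (∀ n, x n ∈ A) ∧ ∃ e, RUTendsto x l e}

/-- `A` is uniformly closed. -/
def RUClosed (A : Set X) : Prop := uAdh A ⊆ A

/-- Uniform closure: the least uniformly closed superset of `A`. -/
def uClosure (A : Set X) : Set X := ⋂₀ {B : Set X | A ⊆ B ∧ RUClosed B}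

variable (X)

/-- Relative uniform completeness (for sequences). -/
def RUComplete : Prop :=
  ∀ x : ℕ → X, (∃ e, RUCauchy x e) → ∃ l e, RUTendsto x l e

variable {X}

/-- Relative uniform completeness of a sublattice `Y` (regulators taken in `Y`). -/
def RUCompleteIn (Y : Set X) : Prop :=
  ∀ x : ℕ → X, (∀ n, x n ∈ Y) → (∃ e ∈ Y, RUCauchy x e) →
    ∃ l ∈ Y, ∃ e ∈ Y, RUTendsto x l e

/-- An (order) ideal of a vector lattice: a solid linear subspace. -/
def IsVLIdeal (I : Set X) : Prop :=
  (0 : X) ∈ I ∧ (∀ a ∈ I, ∀ b ∈ I, a + b ∈ I) ∧ (∀ (c : ℝ), ∀ a ∈ I, c • a ∈ I) ∧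
    ∀ x : X, ∀ y ∈ I, |x| ≤ |y| → x ∈ I

/-- The ideal generated by a set. -/
def idealGen (Y : Set X) : Set X := ⋂₀ {I : Set X | Y ⊆ I ∧ IsVLIdeal I}

/-- `B` is a projection band: an ideal along which the space decomposes. -/
def IsProjectionBand (B : Set X) : Prop :=
  IsVLIdeal B ∧ ∀ x : X, ∃ b ∈ B, ∃ d : X, (∀ y ∈ B, |d| ⊓ |y| = 0) ∧ x = b + d

end Defs

section Aux

variable {X : Type*} [Lattice X] [AddCommGroup X] [Module ℝ X]
  [CovariantClass X X (· + ·) (· ≤ ·)] [PosSMulMono ℝ X]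

lemma arch_aux (harch : VLArchimedean X) {a b : X} (hb : 0 ≤ b)
    (h : ∀ δ : ℝ, 0 < δ → a ≤ δ • b) : a ≤ 0 := by
  apply harch a b
  intro n
  cases n with
  | zero => simpa using hb
  | succ k =>
    have hp : (0:ℝ) < (k + 1 : ℕ) := by positivity
    have h1 : a ≤ (1 / ((k : ℝ) + 1)) • b := h _ (by positivity)
    have key : ((k + 1 : ℕ) : ℝ) • a ≤ b := by
      push_cast
      calc ((k:ℝ)+1) • a ≤ ((k:ℝ)+1) • ((1/((k:ℝ)+1)) • b) :=
            smul_le_smul_of_nonneg_left h1 (by positivity : (0:ℝ) ≤ (k:ℝ)+1)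
        _ = b := by
            rw [smul_smul, mul_one_div_cancel (by positivity : ((k:ℝ)+1) ≠ 0), one_smul]
    rwa [Nat.cast_smul_eq_nsmul] at key

lemma tri_aux (a b c : X) : |a - c| ≤ |a - b| + |b - c| := by
  have : a - c = (a - b) + (b - c) := by abel
  rw [this]; exact abs_add_le _ _

end Aux
theorem uniformly_closed_iff_ru_complete_for_sublattices
    {X : Type*} [Lattice X] [AddCommGroup X] [Module ℝ X]
    [CovariantClass X X (· + ·) (· ≤ ·)] [PosSMulMono ℝ X]
    (harch : VLArchimedean X) (hcomp : RUComplete X)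
    {Y : Set X} (hY : IsVLSublattice Y) :
    (RUClosed Y → RUCompleteIn Y) ∧
      (Majorizing Y → RUCompleteIn Y → RUClosed Y) := by
  obtain ⟨hY0, hYadd, hYsmul, hYsup⟩ := hY
  constructor
  · -- closed → complete
    intro hcl x hxY ⟨e, heY, hce⟩
    obtain ⟨he0, hC⟩ := hce
    obtain ⟨l, e', hl⟩ := hcomp x ⟨e, he0, hC⟩
    obtain ⟨he'0, hL⟩ := hl
    -- x tends to l with regulator e itself
    have hkey : RUTendsto x l e := by
      refine ⟨he0, fun ε hε => ?_⟩
      obtain ⟨N, hN⟩ := hC ε hε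
      refine ⟨N, fun n hn => ?_⟩
      have haux : |x n - l| - ε • e ≤ 0 := by
        apply arch_aux harch he'0
        intro δ hδ
        obtain ⟨M, hM⟩ := hL δ hδ
        have h1 := hN n hn (max N M) (le_max_left _ _)
        have h2 := hM (max N M) (le_max_right _ _)
        have := (tri_aux (x n) (x (max N M)) l).trans (add_le_add h1 h2)
        exact sub_le_iff_le_add'.mpr this
      exact sub_nonpos.mp haux
    exact ⟨l, hcl ⟨x, hxY, e, hkey⟩, e, heY, hkey⟩
  · -- majorizing + complete → closed
    intro hmaj hcomp' l ⟨x, hxY, e, he0, hL⟩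
    obtain ⟨e', he'Y, hee'⟩ := hmaj e he0
    set E := e' ⊔ 0 with hE
    have hEY : E ∈ Y := hYsup _ he'Y _ hY0
    have hE0 : (0:X) ≤ E := le_sup_right
    have heE : e ≤ E := hee'.trans le_sup_left
    have hcau : RUCauchy x E := by
      refine ⟨hE0, fun ε hε => ?_⟩
      obtain ⟨N, hN⟩ := hL (ε / 2) (by linarith)
      refine ⟨N, fun n hn m hm => ?_⟩
      have h1 := hN n hn
      have h2 := hN m hm
      have habs : |x m - l| = |l - x m| := by rw [abs_sub_comm]
      have := (tri_aux (x n) l (x m)).trans (add_le_add h1 (habs ▸ h2))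
      calc |x n - x m| ≤ (ε/2) • e + (ε/2) • e := this
        _ = ε • e := by rw [← add_smul]; ring_nf
        _ ≤ ε • E := smul_le_smul_of_nonneg_left heE hε.le
    obtain ⟨l', hl'Y, e₀, he₀Y, he₀0, hL'⟩ := hcomp' x hxY ⟨E, hEY, hcau⟩
    have : l = l' := by
      have hab : |l - l'| ≤ 0 := by
        apply arch_aux harch (b := e + e₀) (add_nonneg he0 he₀0)
        intro δ hδ
        obtain ⟨N1, hN1⟩ := hL δ hδ
        obtain ⟨N2, hN2⟩ := hL' δ hδ
        have h1 := hN1 (max N1 N2) (le_max_left _ _)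
        have h2 := hN2 (max N1 N2) (le_max_right _ _)
        have habs : |x (max N1 N2) - l| = |l - x (max N1 N2)| := abs_sub_comm _ _
        calc |l - l'| ≤ |l - x (max N1 N2)| + |x (max N1 N2) - l'| := tri_aux _ _ _
          _ ≤ δ • e + δ • e₀ := add_le_add (habs ▸ h1) h2
          _ = δ • (e + e₀) := (smul_add _ _ _).symm
      have h1 : l - l' ≤ 0 := (le_abs_self _).trans hab
      have h2 : l' - l ≤ 0 := (le_abs_self _).trans ((abs_sub_comm l' l) ▸ hab)
      have := le_antisymm h1 (by rwa [← neg_sub, neg_nonpos] at h2)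
      exact sub_eq_zero.mp this
    exact this ▸ hl'Y
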